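/- Assume that for each pair (d,h) ∈ D × H there is at most one contract x ∈ 𝐗 with x_D = d and x_H = h, and that every hospital's preference is substitutable. Fix a doctor d and a preference P_d, let y be such that {y} = W_d(P_d, O^{φ̲}(P_d)), choose P̂_{−d} with φ̲_d(P_d, P̂_{−d}) = {y}, and set X̂ := φ̲(P_d, P̂_{−d}). Let P̃_{−d} be the profile in which each doctor i ≠ d ranks X̂_i first, then ∅, with all other contracts unacceptable. Then {y} R_d φ̲_d(P'_d, P̃_{−d}) for every preference P'_d of doctor d. -/

import Mathlib

set_option linter.unusedSectionVars false

namespace Matching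

open Finset

/-- A many-to-one matching market with contracts: each contract `x` involves exactly one
doctor `xD x` and one hospital `xH x`; each hospital `h` has a fixed antisymmetric,
transitive and complete preference `prH h`, modelled as a linear order on sets of
contracts (only its comparisons between allocations of contracts involving `h` matter). -/
structure Market (D H X : Type*) where
  xD : X → D
  xH : X → H
  prH : H → LinearOrder (Finset X)

/-- A doctor's preference: an antisymmetric, transitive and complete preference, modelled
as a linear order on sets of contracts (only comparisons between `∅` and singletons of
contracts involving the doctor matter). -/
abbrev Pref (X : Type*) := LinearOrder (Finset X)

/-- A profile of doctors' preferences. -/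
abbrev Profile (D X : Type*) := D → Pref X

variable {D H X : Type*}
variable [DecidableEq D] [DecidableEq H] [DecidableEq X] [Fintype D] [Fintype H] [Fintype X]

/-- `Y_d` : the contracts in `Y` involving doctor `d`. -/
def docPart (M : Market D H X) (Y : Finset X) (d : D) : Finset X :=
  Y.filter fun x => M.xD x = d

/-- `Y_h` : the contracts in `Y` involving hospital `h`. -/
def hospPart (M : Market D H X) (Y : Finset X) (h : H) : Finset X :=
  Y.filter fun x => M.xH x = h

/-- An allocation: distinct contracts involve distinct doctors. -/
def IsAllocation (M : Market D H X) (Z : Finset X) : Prop :=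
  ∀ x ∈ Z, ∀ y ∈ Z, M.xD x = M.xD y → x = y

/-- `A(Y)` : the allocations contained in `Y`. -/
def allocs (M : Market D H X) (Y : Finset X) : Finset (Finset X) :=
  Y.powerset.filter fun Z => ∀ x ∈ Z, ∀ y ∈ Z, M.xD x = M.xD y → x = y

lemma empty_mem_allocs (M : Market D H X) (Y : Finset X) : ∅ ∈ allocs M Y := by
  simp [allocs]

/-- The best allocation contained in `Y` according to the linear order `pr`. -/
def bestAlloc (M : Market D H X) (pr : Pref X) (Y : Finset X) : Finset X :=
  @Finset.max' _ pr (allocs M Y) ⟨∅, empty_mem_allocs M Y⟩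

/-- `C_h(Y)` : hospital `h`'s choice set from `Y` (the `≻_h`-maximum of `A(Y_h)`). -/
def Ch (M : Market D H X) (h : H) (Y : Finset X) : Finset X :=
  bestAlloc M (M.prH h) (hospPart M Y h)

/-- `C_d(P_d, Y)` : doctor `d`'s choice set from `Y` (the `P_d`-maximum of `A(Y_d)`). -/
def Cd (M : Market D H X) (Pd : Pref X) (d : D) (Y : Finset X) : Finset X :=
  bestAlloc M Pd (docPart M Y d)

/-- `C_H(Y) = ∪_{h ∈ H} C_h(Y)`. -/
def CH (M : Market D H X) (Y : Finset X) : Finset X :=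
  univ.biUnion fun h => Ch M h Y

/-- `C_D(Y) = ∪_{d ∈ D} C_d(Y)`. -/
def CD (M : Market D H X) (P : Profile D X) (Y : Finset X) : Finset X :=
  univ.biUnion fun d => Cd M (P d) d Y

/-- Substitutability of hospital `h`'s preference: `x ∈ C_h(W)` and `x ∈ Y_h ⊆ W_h`
imply `x ∈ C_h(Y)`. -/
def Substitutable (M : Market D H X) (h : H) : Prop :=
  ∀ W Y : Finset X, hospPart M Y h ⊆ hospPart M W h →
    ∀ x ∈ hospPart M Y h, x ∈ Ch M h W → x ∈ Ch M h Y

/-- The sets `X^t` of still-available contracts in the doctor-proposing deferred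
acceptance algorithm (0-based: index `t` corresponds to iteration `t+1`). -/
def DDAsets (M : Market D H X) (P : Profile D X) : ℕ → Finset X
  | 0 => univ
  | t + 1 =>
      DDAsets M P t \ (CD M P (DDAsets M P t) \ CH M (CD M P (DDAsets M P t)))

/-- `O^t` : the offers made by the doctors at iteration `t` of D-DA (0-based). -/
def offers (M : Market D H X) (P : Profile D X) (t : ℕ) : Finset X :=
  CD M P (DDAsets M P t)

/-- `O_A^t = ∪_{k ≤ t} O^k` : the accumulated offers up to iteration `t` (0-based). -/
def accOffers (M : Market D H X) (P : Profile D X) (t : ℕ) : Finset X :=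
  (Finset.range (t + 1)).biUnion fun k => offers M P k

/-- D-DA has stopped at iteration `t`: all offers are accepted. -/
def DDAstopped (M : Market D H X) (P : Profile D X) (t : ℕ) : Prop :=
  CH M (offers M P t) = offers M P t

/-- The (0-based) last iteration of D-DA, i.e. `T - 1` where `T` is the number of
iterations of D-DA. -/
noncomputable def DDAlast (M : Market D H X) (P : Profile D X) : ℕ :=
  sInf {t | DDAstopped M P t}

/-- The output of D-DA (the algorithm provably stops by iteration `Fintype.card X`,
and once stopped the offer sets stay constant). -/
def DDAoutput (M : Market D H X) (P : Profile D X) : Finset X :=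
  CH M (offers M P (Fintype.card X))

/-- The doctor-optimal rule `φ̄`, giving doctor `d`'s outcome `φ̄_d(P)` (an element of
`A(𝐗_d)`, i.e. `∅` or a singleton). -/
def docOpt (M : Market D H X) (P : Profile D X) (d : D) : Finset X :=
  docPart M (DDAoutput M P) d

/-- The sets `X^t` of still-available contracts in the hospital-proposing deferred
acceptance algorithm (0-based). -/
def HDAsets (M : Market D H X) (P : Profile D X) : ℕ → Finset X
  | 0 => univ
  | t + 1 =>
      HDAsets M P t \ (CH M (HDAsets M P t) \ CD M P (CH M (HDAsets M P t)))

/-- The offers made by the hospitals at iteration `t` of H-DA (0-based). -/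
def hOffers (M : Market D H X) (P : Profile D X) (t : ℕ) : Finset X :=
  CH M (HDAsets M P t)

/-- The output of H-DA. -/
def HDAoutput (M : Market D H X) (P : Profile D X) : Finset X :=
  CD M P (hOffers M P (Fintype.card X))

/-- The hospital-optimal rule `φ̲`, giving doctor `d`'s outcome `φ̲_d(P)`. -/
def hospOpt (M : Market D H X) (P : Profile D X) (d : D) : Finset X :=
  docPart M (HDAoutput M P) d

/-- The option set `O^φ(P_d)` left open by `P_d` at the rule `φ`. -/
def optionSet (rule : Profile D X → D → Finset X) (d : D) (Pd : Pref X) :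
    Set (Finset X) :=
  {S | ∃ P : Profile D X, P d = Pd ∧ S = rule P d}

open scoped Classical in
/-- `W_d(pr, S)` : the `pr`-worst element of the (finite) set `S` of outcomes. -/
noncomputable def worstIn (pr : Pref X) (S : Set (Finset X)) : Finset X :=
  if h : S.Nonempty then
    @Finset.min' _ pr (Set.toFinite S).toFinset ((Set.Finite.toFinset_nonempty _).mpr h)
  else ∅

open scoped Classical in
/-- The `pr`-best element of the (finite) set `S` of outcomes. -/
noncomputable def bestIn (pr : Pref X) (S : Set (Finset X)) : Finset X :=
  if h : S.Nonempty then
    @Finset.max' _ pr (Set.toFinite S).toFinset ((Set.Finite.toFinset_nonempty _).mpr h)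
  else ∅

/-- `P'_d` is a manipulation of the rule at `P_d` : for some subprofile of the other
doctors, reporting `P'_d` gives a strictly `P_d`-better outcome than truth-telling. -/
def IsManip (rule : Profile D X → D → Finset X) (d : D) (Pd P'd : Pref X) : Prop :=
  ∃ P : Profile D X, P d = Pd ∧
    Pd.lt (rule P d) (rule (Function.update P d P'd) d)

/-- `P'_d` is an obvious manipulation of the rule at `P_d`. -/
def IsObviousManip (rule : Profile D X → D → Finset X) (d : D) (Pd P'd : Pref X) :
    Prop :=
  IsManip rule d Pd P'd ∧
    (Pd.lt (worstIn Pd (optionSet rule d Pd)) (worstIn Pd (optionSet rule d P'd)) ∨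
     Pd.lt (bestIn Pd (optionSet rule d Pd)) (bestIn Pd (optionSet rule d P'd)))

/-- A rule is not obviously manipulable (NOM). -/
def NOM (rule : Profile D X → D → Finset X) : Prop :=
  ∀ (d : D) (Pd P'd : Pref X), ¬ IsObviousManip rule d Pd P'd

/-- A rule is obviously manipulable (OM). -/
def OM (rule : Profile D X → D → Finset X) : Prop :=
  ∃ (d : D) (Pd P'd : Pref X), IsObviousManip rule d Pd P'd

/-- `Y` is a stable allocation at the profile `P` : it is an individually rational
allocation and admits no blocking contract. -/
def IsStable (M : Market D H X) (P : Profile D X) (Y : Finset X) : Prop :=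
  IsAllocation M Y ∧ CD M P Y = Y ∧ CH M Y = Y ∧
    ∀ x : X, x ∉ Y →
      ¬ (x ∈ Cd M (P (M.xD x)) (M.xD x) (insert x Y) ∧
         x ∈ Ch M (M.xH x) (insert x Y))

/-- `⌈kq⌉` where `k` is the number of stable allocations at `P`. -/
noncomputable def quantileIndex (M : Market D H X) (P : Profile D X) (q : ℝ) : ℕ :=
  ⌈(Set.ncard {Y : Finset X | IsStable M P Y} : ℝ) * q⌉₊

/-- `Z` is doctor `d`'s `⌈kq⌉`-th best outcome (according to `P d`) among the `k` stable
allocations at `P` : it is the outcome of some stable allocation, strictly fewer than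
`⌈kq⌉` stable allocations give `d` a strictly better outcome, and at least `⌈kq⌉` stable
allocations give `d` a weakly better outcome. -/
def IsQuantileOutcome (M : Market D H X) (P : Profile D X) (q : ℝ) (d : D)
    (Z : Finset X) : Prop :=
  (∃ Y : Finset X, IsStable M P Y ∧ docPart M Y d = Z) ∧
    Set.ncard {Y : Finset X | IsStable M P Y ∧ (P d).lt Z (docPart M Y d)} <
      quantileIndex M P q ∧
    quantileIndex M P q ≤
      Set.ncard {Y : Finset X | IsStable M P Y ∧ (P d).le Z (docPart M Y d)}


section Aux

variable (M : Market D H X)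

lemma pr_not_le (pr : Pref X) {a b : Finset X} (h : pr.lt a b) : ¬ pr.le b a :=
  ((pr.lt_iff_le_not_ge a b).1 h).2

lemma pr_le_of_lt (pr : Pref X) {a b : Finset X} (h : pr.lt a b) : pr.le a b :=
  ((pr.lt_iff_le_not_ge a b).1 h).1

lemma mem_allocs {Y Z : Finset X} :
    Z ∈ allocs M Y ↔ Z ⊆ Y ∧ ∀ x ∈ Z, ∀ w ∈ Z, M.xD x = M.xD w → x = w := by
  simp [allocs]

lemma mem_docPart {Y : Finset X} {d : D} {x : X} :
    x ∈ docPart M Y d ↔ x ∈ Y ∧ M.xD x = d := by simp [docPart]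

lemma mem_hospPart {Y : Finset X} {h : H} {x : X} :
    x ∈ hospPart M Y h ↔ x ∈ Y ∧ M.xH x = h := by simp [hospPart]

lemma bestAlloc_mem (pr : Pref X) (Y : Finset X) : bestAlloc M pr Y ∈ allocs M Y :=
  @Finset.max'_mem _ pr _ _

lemma allocs_subset {Y Z : Finset X} (h : Z ∈ allocs M Y) : Z ⊆ Y :=
  ((mem_allocs M).1 h).1

lemma le_bestAlloc (pr : Pref X) {Y Z : Finset X} (h : Z ∈ allocs M Y) :
    pr.le Z (bestAlloc M pr Y) := by
  letI := pr
  exact Finset.le_max' (allocs M Y) Z h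

lemma singleton_mem_allocs_docPart {Y : Finset X} {d : D} {z : X}
    (hz : z ∈ Y) (hzd : M.xD z = d) : ({z} : Finset X) ∈ allocs M (docPart M Y d) := by
  rw [mem_allocs]
  constructor
  · simp [Finset.singleton_subset_iff, mem_docPart, hz, hzd]
  · intro a ha b hb _
    simp only [Finset.mem_singleton] at ha hb
    rw [ha, hb]

lemma Cd_subset (pr : Pref X) (d : D) (Y : Finset X) : Cd M pr d Y ⊆ docPart M Y d :=
  allocs_subset M (bestAlloc_mem M pr _)

lemma Ch_subset (h : H) (Y : Finset X) : Ch M h Y ⊆ hospPart M Y h :=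
  allocs_subset M (bestAlloc_mem M _ _)

lemma Cd_eq_of_mem {pr : Pref X} {d : D} {Y : Finset X} {z : X}
    (hz : z ∈ Cd M pr d Y) : Cd M pr d Y = {z} := by
  have h := (mem_allocs M).1 (bestAlloc_mem M pr (docPart M Y d))
  refine Finset.eq_singleton_iff_unique_mem.2 ⟨hz, fun w hw => ?_⟩
  have hd1 := (mem_docPart M).1 (h.1 hw)
  have hd2 := (mem_docPart M).1 (h.1 hz)
  exact h.2 w hw z hz (hd1.2.trans hd2.2.symm)

lemma mem_CH {Y : Finset X} {x : X} : x ∈ CH M Y ↔ x ∈ Ch M (M.xH x) Y := by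
  constructor
  · intro hx
    obtain ⟨h, -, hxh⟩ := Finset.mem_biUnion.1 hx
    have h2 := (mem_hospPart M).1 (Ch_subset M h Y hxh)
    rwa [h2.2]
  · intro hx
    exact Finset.mem_biUnion.2 ⟨M.xH x, Finset.mem_univ _, hx⟩

lemma CH_subset (Y : Finset X) : CH M Y ⊆ Y := fun x hx =>
  ((mem_hospPart M).1 (Ch_subset M _ _ ((mem_CH M).1 hx))).1

lemma mem_CD {P : Profile D X} {Y : Finset X} {x : X} :
    x ∈ CD M P Y ↔ x ∈ Cd M (P (M.xD x)) (M.xD x) Y := by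
  constructor
  · intro hx
    obtain ⟨i, -, hxi⟩ := Finset.mem_biUnion.1 hx
    have h2 := (mem_docPart M).1 (Cd_subset M (P i) i Y hxi)
    rwa [h2.2]
  · intro hx
    exact Finset.mem_biUnion.2 ⟨M.xD x, Finset.mem_univ _, hx⟩

lemma CD_subset (P : Profile D X) (Y : Finset X) : CD M P Y ⊆ Y := fun x hx =>
  ((mem_docPart M).1 (Cd_subset M _ _ _ ((mem_CD M).1 hx))).1

lemma docPart_CD (P : Profile D X) (Y : Finset X) (d : D) :
    docPart M (CD M P Y) d = Cd M (P d) d Y := by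
  ext x
  rw [mem_docPart]
  constructor
  · rintro ⟨hx, hxd⟩
    have hx' := (mem_CD M).1 hx
    rwa [hxd] at hx'
  · intro hx
    have hxd := ((mem_docPart M).1 (Cd_subset M (P d) d Y hx)).2
    refine ⟨(mem_CD M).2 ?_, hxd⟩
    rwa [hxd]

lemma HDAsets_succ (P : Profile D X) (t : ℕ) :
    HDAsets M P (t + 1) =
      HDAsets M P t \ (CH M (HDAsets M P t) \ CD M P (CH M (HDAsets M P t))) := rfl

lemma HDAsets_succ_subset (P : Profile D X) (t : ℕ) :
    HDAsets M P (t + 1) ⊆ HDAsets M P t := by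
  rw [HDAsets_succ]; exact Finset.sdiff_subset

lemma kept (P : Profile D X) (hsub : ∀ h : H, Substitutable M h) {t : ℕ} {x : X}
    (hx : x ∈ CH M (HDAsets M P t)) (hcd : x ∈ CD M P (CH M (HDAsets M P t))) :
    x ∈ CH M (HDAsets M P (t + 1)) := by
  have hxt : x ∈ HDAsets M P t := CH_subset M _ hx
  have hx1 : x ∈ HDAsets M P (t + 1) := by
    rw [HDAsets_succ, Finset.mem_sdiff]
    exact ⟨hxt, fun hmem => (Finset.mem_sdiff.1 hmem).2 hcd⟩
  have hch := (mem_CH M).1 hx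
  refine (mem_CH M).2 (hsub (M.xH x) (HDAsets M P t) (HDAsets M P (t + 1)) ?_ x ?_ hch)
  · intro w hw
    obtain ⟨hw1, hw2⟩ := (mem_hospPart M).1 hw
    exact (mem_hospPart M).2 ⟨HDAsets_succ_subset M P t hw1, hw2⟩
  · exact (mem_hospPart M).2 ⟨hx1, rfl⟩

lemma offered_of_removed (P : Profile D X) {t : ℕ} {x : X} (hx : x ∉ HDAsets M P t) :
    ∃ s < t, x ∈ CH M (HDAsets M P s) := by
  induction t with
  | zero => exact absurd (Finset.mem_univ x) hx
  | succ t ih =>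
      by_cases hxt : x ∈ HDAsets M P t
      · refine ⟨t, Nat.lt_succ_self t, ?_⟩
        by_contra hch
        refine hx ?_
        rw [HDAsets_succ, Finset.mem_sdiff]
        exact ⟨hxt, fun hm => hch (Finset.mem_sdiff.1 hm).1⟩
      · obtain ⟨s, hs, h⟩ := ih hxt
        exact ⟨s, hs.trans (Nat.lt_succ_self t), h⟩

lemma stopped_step (P : Profile D X) {t : ℕ}
    (h : CD M P (CH M (HDAsets M P t)) = CH M (HDAsets M P t)) :
    HDAsets M P (t + 1) = HDAsets M P t := by
  rw [HDAsets_succ, h, Finset.sdiff_self, Finset.sdiff_empty]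

lemma card_bound (P : Profile D X) : ∀ t : ℕ,
    (∀ s < t, CD M P (CH M (HDAsets M P s)) ≠ CH M (HDAsets M P s)) →
    (HDAsets M P t).card + t ≤ Fintype.card X := by
  intro t
  induction t with
  | zero => intro _; simpa using Finset.card_le_univ (HDAsets M P 0)
  | succ t ih =>
      intro h
      have ht := ih fun s hs => h s (hs.trans (Nat.lt_succ_self t))
      have hne := h t (Nat.lt_succ_self t)
      have hss : CD M P (CH M (HDAsets M P t)) ⊂ CH M (HDAsets M P t) :=
        (CD_subset M P _).ssubset_of_ne hne
      obtain ⟨x, hx1, hx2⟩ := Finset.exists_of_ssubset hss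
      have hx3 : x ∉ HDAsets M P (t + 1) := by
        rw [HDAsets_succ, Finset.mem_sdiff]
        push_neg
        exact fun _ => Finset.mem_sdiff.2 ⟨hx1, hx2⟩
      have hlt : (HDAsets M P (t + 1)).card < (HDAsets M P t).card := by
        apply Finset.card_lt_card
        rw [Finset.ssubset_iff_of_subset (HDAsets_succ_subset M P t)]
        exact ⟨x, CH_subset M _ hx1, hx3⟩
      omega

lemma stopped_at_card (P : Profile D X) :
    CD M P (CH M (HDAsets M P (Fintype.card X))) = CH M (HDAsets M P (Fintype.card X)) := by
  by_cases hex : ∃ T ≤ Fintype.card X,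
      CD M P (CH M (HDAsets M P T)) = CH M (HDAsets M P T)
  · obtain ⟨T, hT, hstop⟩ := hex
    have hconst : ∀ s, T ≤ s → HDAsets M P s = HDAsets M P T := by
      intro s hs
      induction s, hs using Nat.le_induction with
      | base => rfl
      | succ s hs ih =>
          have h' : CD M P (CH M (HDAsets M P s)) = CH M (HDAsets M P s) := by
            rw [ih]; exact hstop
          rw [stopped_step M P h', ih]
    rw [hconst (Fintype.card X) hT]
    exact hstop
  · push_neg at hex
    have hb := card_bound M P (Fintype.card X) fun s hs => hex s (le_of_lt hs)
    have hc : (HDAsets M P (Fintype.card X)).card = 0 := by omega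
    have hempty : HDAsets M P (Fintype.card X) = ∅ := Finset.card_eq_zero.1 hc
    rw [hempty]
    have hCH : CH M (∅ : Finset X) = ∅ := Finset.subset_empty.1 (CH_subset M ∅)
    rw [hCH]
    exact Finset.subset_empty.1 (CD_subset M P ∅)

lemma HDAoutput_eq (P : Profile D X) :
    HDAoutput M P = CH M (HDAsets M P (Fintype.card X)) :=
  stopped_at_card M P

lemma chain (P : Profile D X) (hsub : ∀ h : H, Substitutable M h) (d : D) {u v : ℕ}
    (huv : u ≤ v) :
    (P d).le (Cd M (P d) d (CH M (HDAsets M P u))) (Cd M (P d) d (CH M (HDAsets M P v))) := by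
  induction v, huv using Nat.le_induction with
  | base => exact (P d).le_refl _
  | succ v hv ih =>
      have hmem : Cd M (P d) d (CH M (HDAsets M P v)) ∈
          allocs M (docPart M (CH M (HDAsets M P (v + 1))) d) := by
        rw [mem_allocs]
        refine ⟨fun x hx => ?_, ((mem_allocs M).1 (bestAlloc_mem M (P d) _)).2⟩
        have hxd := (mem_docPart M).1 (Cd_subset M (P d) d _ hx)
        have hcd : x ∈ CD M P (CH M (HDAsets M P v)) :=
          Finset.mem_biUnion.2 ⟨d, Finset.mem_univ _, hx⟩
        exact (mem_docPart M).2 ⟨kept M P hsub hxd.1 hcd, hxd.2⟩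
      have hstep := le_bestAlloc M (P d) hmem
      exact (P d).le_trans _ _ _ ih hstep

end Aux

/-- Claim in the proof of Theorem 3 (model without contracts): let
`{y} = W_d(P_d, O^{φ̲}(P_d))`, choose `P̂_{-d}` with `φ̲_d(P_d, P̂_{-d}) = {y}` and set
`X̂ := φ̲(P_d, P̂_{-d})`; if each doctor `i ≠ d` ranks `X̂_i` first and then `∅`, with
every other contract unacceptable, then `{y} R_d φ̲_d(P'_d, P̃_{-d})` for every `P'_d`. -/
theorem hospOpt_claim (M : Market D H X)
    (hone : ∀ x y : X, M.xD x = M.xD y → M.xH x = M.xH y → x = y)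
    (hsub : ∀ h : H, Substitutable M h)
    (d : D) (Pd : Pref X) (y : X)
    (hy : worstIn Pd (optionSet (hospOpt M) d Pd) = {y})
    (Phat : Profile D X) (hPhatd : Phat d = Pd)
    (hPhaty : hospOpt M Phat d = {y})
    (Pt : Profile D X)
    (hPt : ∀ i : D, i ≠ d →
      (∀ w : X, M.xD w = i → ({w} : Finset X) ≠ docPart M (HDAoutput M Phat) i →
        (Pt i).lt ({w} : Finset X) ∅) ∧
      (docPart M (HDAoutput M Phat) i ≠ ∅ →
        (Pt i).lt (∅ : Finset X) (docPart M (HDAoutput M Phat) i))) :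
    ∀ P'd : Pref X,
      Pd.le (hospOpt M (Function.update Pt d P'd) d) ({y} : Finset X) := by
  intro P'd
  -- basic facts about y
  have hdp : docPart M (HDAoutput M Phat) d = ({y} : Finset X) := hPhaty
  have hymem : y ∈ docPart M (HDAoutput M Phat) d := by
    rw [hdp]; exact Finset.mem_singleton_self y
  have hyD : M.xD y = d := ((mem_docPart M).1 hymem).2
  set h0 := M.xH y with hh0
  set P' := Function.update Pt d P'd with hP'
  have hXhat : HDAoutput M Phat = CH M (HDAsets M Phat (Fintype.card X)) :=
    HDAoutput_eq M Phat
  -- core: contracts of X̂ other than y are always chosen by their doctors under P'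
  have hcore : ∀ x : X, x ∈ HDAoutput M Phat → x ≠ y →
      ∀ Y : Finset X, x ∈ Y → x ∈ CD M P' Y := by
    intro x hxO hxy Y hxY
    have hid : M.xD x ≠ d := by
      intro h
      apply hxy
      have hx' : x ∈ docPart M (HDAoutput M Phat) d := (mem_docPart M).2 ⟨hxO, h⟩
      rw [hdp] at hx'
      exact Finset.mem_singleton.1 hx'
    obtain ⟨h1, h2⟩ := hPt (M.xD x) hid
    have hXi : docPart M (HDAoutput M Phat) (M.xD x) = {x} := by
      have hCdEq : docPart M (HDAoutput M Phat) (M.xD x) =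
          Cd M (Phat (M.xD x)) (M.xD x) (hOffers M Phat (Fintype.card X)) :=
        docPart_CD M Phat _ _
      have hmem : x ∈ docPart M (HDAoutput M Phat) (M.xD x) :=
        (mem_docPart M).2 ⟨hxO, rfl⟩
      rw [hCdEq] at hmem ⊢
      exact Cd_eq_of_mem M hmem
    have hx1 : ({x} : Finset X) ∈ allocs M (docPart M Y (M.xD x)) :=
      singleton_mem_allocs_docPart M hxY rfl
    have hle : (Pt (M.xD x)).le {x} (Cd M (Pt (M.xD x)) (M.xD x) Y) :=
      le_bestAlloc M _ hx1
    have hlt0 : (Pt (M.xD x)).lt ∅ ({x} : Finset X) := by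
      have h2' := h2 (by rw [hXi]; exact Finset.singleton_ne_empty x)
      rwa [hXi] at h2'
    have hxCd : x ∈ Cd M (Pt (M.xD x)) (M.xD x) Y := by
      by_contra hxn
      rcases Finset.eq_empty_or_nonempty (Cd M (Pt (M.xD x)) (M.xD x) Y) with he | hne
      · rw [he] at hle
        exact absurd hle (pr_not_le _ hlt0)
      · obtain ⟨w, hw⟩ := hne
        have hwX := Cd_eq_of_mem M hw
        have hwd : M.xD w = M.xD x := ((mem_docPart M).1 (Cd_subset M _ _ _ hw)).2
        have hwx : w ≠ x := fun h => hxn (h ▸ hw)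
        have hlw : (Pt (M.xD x)).lt ({w} : Finset X) ∅ := by
          apply h1 w hwd
          rw [hXi]
          simpa using hwx
        rw [hwX] at hle
        exact absurd ((Pt (M.xD x)).le_trans _ _ _ hle (pr_le_of_lt _ hlw)) (pr_not_le _ hlt0)
    refine Finset.mem_biUnion.2 ⟨M.xD x, Finset.mem_univ _, ?_⟩
    rwa [hP', Function.update_of_ne hid]
  -- the invariant comparing the two runs
  have hINV : ∀ t : ℕ, ∀ x : X, x ∈ HDAsets M Phat (Fintype.card X) →
      (M.xH x ≠ h0 ∨ (x ∈ HDAoutput M Phat ∧ x ≠ y)) → x ∈ HDAsets M P' t := by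
    intro t
    induction t with
    | zero => intro x _ _; exact Finset.mem_univ x
    | succ t ih =>
        intro x hxA hx
        have hxB : x ∈ HDAsets M P' t := ih x hxA hx
        rw [HDAsets_succ, Finset.mem_sdiff]
        refine ⟨hxB, fun hrem => ?_⟩
        rw [Finset.mem_sdiff] at hrem
        obtain ⟨hxCH, hxCD⟩ := hrem
        have hkey : x ∈ HDAoutput M Phat ∧ x ≠ y := by
          rcases hx with hxh | hkey
          · have hsubh : hospPart M (HDAsets M Phat (Fintype.card X)) (M.xH x) ⊆
                hospPart M (HDAsets M P' t) (M.xH x) := by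
              intro w hw
              obtain ⟨hw1, hw2⟩ := (mem_hospPart M).1 hw
              refine (mem_hospPart M).2 ⟨ih w hw1 (Or.inl ?_), hw2⟩
              rw [hw2]; exact hxh
            have hxChA : x ∈ Ch M (M.xH x) (HDAsets M Phat (Fintype.card X)) :=
              hsub (M.xH x) (HDAsets M P' t) (HDAsets M Phat (Fintype.card X)) hsubh x
                ((mem_hospPart M).2 ⟨hxA, rfl⟩) ((mem_CH M).1 hxCH)
            have hxX : x ∈ HDAoutput M Phat := by
              rw [hXhat]; exact (mem_CH M).2 hxChA
            exact ⟨hxX, fun h => hxh (by rw [h, hh0])⟩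
          · exact hkey
        exact hxCD (hcore x hkey.1 hkey.2 _ hxCH)
  -- the outcome of doctor d under the manipulated profile
  have hout : hospOpt M P' d = Cd M P'd d (CH M (HDAsets M P' (Fintype.card X))) := by
    have h1 : hospOpt M P' d = Cd M (P' d) d (hOffers M P' (Fintype.card X)) :=
      docPart_CD M P' _ d
    rw [h1, hP', Function.update_self]
    rfl
  have hyb : ({y} : Finset X) = Cd M Pd d (CH M (HDAsets M Phat (Fintype.card X))) := by
    rw [← hPhaty]
    have h1 : hospOpt M Phat d = Cd M (Phat d) d (hOffers M Phat (Fintype.card X)) :=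
      docPart_CD M Phat _ d
    rw [h1, hPhatd]
    rfl
  rcases Finset.eq_empty_or_nonempty
      (Cd M P'd d (CH M (HDAsets M P' (Fintype.card X)))) with hS | hne
  · rw [hout, hS, hyb]
    exact le_bestAlloc M Pd (empty_mem_allocs M _)
  · obtain ⟨z, hz⟩ := hne
    have hSz : Cd M P'd d (CH M (HDAsets M P' (Fintype.card X))) = {z} := Cd_eq_of_mem M hz
    have hzmem := (mem_docPart M).1 (Cd_subset M P'd d _ hz)
    rw [hout, hSz]
    by_cases hzy : z = y
    · rw [hzy]; exact Pd.le_refl _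
    · by_cases hzh : M.xH z = h0
      · exact absurd (hone z y (hzmem.2.trans hyD.symm) (hzh.trans hh0)) hzy
      · have hz_off : ∃ s ≤ Fintype.card X, z ∈ CH M (HDAsets M Phat s) := by
          by_cases hzA : z ∈ HDAsets M Phat (Fintype.card X)
          · refine ⟨Fintype.card X, le_refl _, ?_⟩
            have hsubh : hospPart M (HDAsets M Phat (Fintype.card X)) (M.xH z) ⊆
                hospPart M (HDAsets M P' (Fintype.card X)) (M.xH z) := by
              intro w hw
              obtain ⟨hw1, hw2⟩ := (mem_hospPart M).1 hw
              refine (mem_hospPart M).2 ⟨hINV (Fintype.card X) w hw1 (Or.inl ?_), hw2⟩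
              rw [hw2]; exact hzh
            exact (mem_CH M).2 (hsub (M.xH z) (HDAsets M P' (Fintype.card X))
              (HDAsets M Phat (Fintype.card X)) hsubh z
              ((mem_hospPart M).2 ⟨hzA, rfl⟩) ((mem_CH M).1 hzmem.1))
          · obtain ⟨s, hs, hzs⟩ := offered_of_removed M Phat hzA
            exact ⟨s, le_of_lt hs, hzs⟩
        obtain ⟨s, hsN, hzs⟩ := hz_off
        have h1 : Pd.le ({z} : Finset X) (Cd M Pd d (CH M (HDAsets M Phat s))) :=
          le_bestAlloc M Pd (singleton_mem_allocs_docPart M hzs hzmem.2)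
        have h2 : Pd.le (Cd M Pd d (CH M (HDAsets M Phat s)))
            (Cd M Pd d (CH M (HDAsets M Phat (Fintype.card X)))) := by
          have hc := chain M Phat hsub d hsN
          rwa [hPhatd] at hc
        rw [hyb]
        exact Pd.le_trans _ _ _ h1 h2

end Matching
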